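/- arXiv:2011.00740 — 3 statements merged into one kernel-verified Lean document; each statement's English description precedes it below -/
import Mathlib

section
/- Let G be an acyclic directed graph and let a, b, c be vertices. Path concatenation, sending a pair (p, q) with p a path from a to b and q a path from b to c to the concatenated path p ⋆ q, is a bijection from (paths from a to b) × (paths from b to c) onto the set of paths from a to c that pass through b. -/
universe v u

/-- A quiver (directed graph) is *acyclic* if for every vertex `a`, the only path from `a`
back to `a` is the nil path. -/
def Quiver.IsAcyclic (V : Type*) [Quiver V] : Prop :=
  ∀ (a : V) (p : Quiver.Path a a), p = Quiver.Path.nil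

/-- The list of vertices visited along a path, including both endpoints
(the starting vertex comes first). -/
def Quiver.Path.visitedVertices {V : Type*} [Quiver V] {a : V} :
    ∀ {b : V}, Quiver.Path a b → List V
  | _, Quiver.Path.nil => [a]
  | b, Quiver.Path.cons p _ => Quiver.Path.visitedVertices p ++ [b]

/-- A path *passes through* a vertex `w` if `w` is one of the vertices visited along it. -/
def Quiver.Path.PassesThrough {V : Type*} [Quiver V] {a b : V}
    (p : Quiver.Path a b) (w : V) : Prop :=
  w ∈ p.visitedVertices

lemma end_mem_vertices {V : Type*} [Quiver V] {a b : V} (p : Quiver.Path a b) :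
    b ∈ p.visitedVertices := by
  induction p with
  | nil => simp [Quiver.Path.visitedVertices]
  | cons p e ih => simp [Quiver.Path.visitedVertices]

lemma mem_vertices_comp_left {V : Type*} [Quiver V] {a b c : V}
    (p : Quiver.Path a b) (q : Quiver.Path b c) {w : V} (hw : w ∈ p.visitedVertices) :
    w ∈ (p.comp q).visitedVertices := by
  induction q with
  | nil => simpa using hw
  | cons q e ih =>
    show w ∈ ((p.comp q).cons e).visitedVertices
    simp [Quiver.Path.visitedVertices]
    exact Or.inl ih

lemma comp_inj_acyclic {V : Type*} [Quiver V] (hG : Quiver.IsAcyclic V) {a b c : V}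
    (p₁ p₂ : Quiver.Path a b) (q₁ q₂ : Quiver.Path b c)
    (h : p₁.comp q₁ = p₂.comp q₂) : p₁ = p₂ ∧ q₁ = q₂ := by
  induction q₂ with
  | nil =>
    have hq := hG b q₁
    subst hq
    simp only [Quiver.Path.comp_nil] at h
    exact ⟨h, rfl⟩
  | cons q₂' e ih =>
    cases q₁ with
    | nil => exact absurd (hG b (q₂'.cons e)) (by simp)
    | cons q₁' e' =>
      rw [Quiver.Path.comp_cons, Quiver.Path.comp_cons] at h
      injection h with h1 h2 h3 h4
      subst h1
      obtain ⟨hp, hq⟩ := ih q₁' (eq_of_heq h3)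
      exact ⟨hp, by rw [hq, eq_of_heq h4]⟩

lemma passes_decomp {V : Type*} [Quiver V] {a b : V} :
    ∀ {c : V} (p : Quiver.Path a c), b ∈ p.visitedVertices →
      ∃ (q : Quiver.Path a b) (r : Quiver.Path b c), q.comp r = p := by
  intro c p
  induction p with
  | nil =>
    intro h
    simp [Quiver.Path.visitedVertices] at h
    subst h
    exact ⟨Quiver.Path.nil, Quiver.Path.nil, rfl⟩
  | cons p' e ih =>
    intro h
    simp [Quiver.Path.visitedVertices] at h
    rcases h with h | h
    · obtain ⟨q, r, hqr⟩ := ih h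
      exact ⟨q, r.cons e, by rw [Quiver.Path.comp_cons, hqr]⟩
    · subst h
      exact ⟨p'.cons e, Quiver.Path.nil, rfl⟩

/-- In an acyclic directed graph, path concatenation `(p, q) ↦ p ⋆ q` is injective on
`(paths a → b) × (paths b → c)`, and its range is exactly the set of paths from `a` to `c`
that pass through `b`; i.e. it is a bijection onto that set. -/
theorem comp_bijective_onto_passesThrough {V : Type u} [Quiver.{v + 1} V]
    (hG : Quiver.IsAcyclic V) (a b c : V) :
    Function.Injective
        (fun pq : Quiver.Path a b × Quiver.Path b c => pq.1.comp pq.2) ∧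
      Set.range (fun pq : Quiver.Path a b × Quiver.Path b c => pq.1.comp pq.2)
        = {p : Quiver.Path a c | p.PassesThrough b} := by
  constructor
  · rintro ⟨p₁, q₁⟩ ⟨p₂, q₂⟩ h
    obtain ⟨hp, hq⟩ := comp_inj_acyclic hG p₁ p₂ q₁ q₂ h
    simp [hp, hq]
  · ext p
    constructor
    · rintro ⟨⟨q, r⟩, rfl⟩
      exact mem_vertices_comp_left q r (end_mem_vertices q)
    · intro h
      obtain ⟨q, r, hqr⟩ := passes_decomp p h
      exact ⟨⟨q, r⟩, hqr⟩
end

section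
/- Let G be an acyclic directed graph and let π = [π₀, π₁, …, πₙ] be a pattern such that for each i < n there exists at least one path from πᵢ to πᵢ₊₁. Then the n-fold concatenation map sending (p₁, p₂, …, pₙ), with pᵢ a path from πᵢ₋₁ to πᵢ, to the concatenated path p₁ ⋆ p₂ ⋆ ⋯ ⋆ pₙ is a bijection from the product ∏_{i=1}^{n} (paths from πᵢ₋₁ to πᵢ) onto γ(π), the set of paths from π₀ to πₙ that pass through every πᵢ. -/
universe v u

/-- Concatenation `p₁ ⋆ p₂ ⋆ ⋯ ⋆ pₙ` of a composable family of paths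
`ps i : Path (π i) (π (i+1))` along a sequence of visitedVertices `π`. -/
def Quiver.composePaths {V : Type u} [Quiver.{v + 1} V] :
    ∀ {n : ℕ} (π : Fin (n + 1) → V),
      (∀ i : Fin n, Quiver.Path (π i.castSucc) (π i.succ)) →
        Quiver.Path (π 0) (π (Fin.last n))
  | 0, _, _ => Quiver.Path.nil
  | n + 1, π, ps =>
      (Quiver.composePaths (fun i : Fin (n + 1) => π i.castSucc)
          (fun i : Fin n => ps i.castSucc)).comp (ps (Fin.last n))

namespace Quiver.Path

variable {V : Type u} [Quiver.{v+1} V]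

theorem visitedVertices_eq_cons {a : V} : ∀ {b : V} (p : Path a b), ∃ l, p.visitedVertices = a :: l
  | _, nil => ⟨[], rfl⟩
  | b, cons p e => by
      obtain ⟨l, hl⟩ := visitedVertices_eq_cons p
      exact ⟨l ++ [b], by simp [visitedVertices, hl]⟩

theorem start_mem_visitedVertices {a b : V} (p : Path a b) : a ∈ p.visitedVertices := by
  obtain ⟨l, hl⟩ := visitedVertices_eq_cons p; simp [hl]

theorem end_mem_visitedVertices {a : V} : ∀ {b : V} (p : Path a b), b ∈ p.visitedVertices
  | _, nil => by simp [visitedVertices]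
  | b, cons p e => by simp [visitedVertices]

theorem visitedVertices_comp {a b : V} (p : Path a b) :
    ∀ {c : V} (q : Path b c), (p.comp q).visitedVertices = p.visitedVertices ++ q.visitedVertices.tail
  | _, nil => by simp [visitedVertices]
  | c, cons q e => by
      obtain ⟨l, hl⟩ := visitedVertices_eq_cons q
      simp [comp_cons, visitedVertices, visitedVertices_comp p q, hl]

theorem mem_visitedVertices_comp {a b c x : V} (p : Path a b) (q : Path b c) :
    x ∈ (p.comp q).visitedVertices ↔ x ∈ p.visitedVertices ∨ x ∈ q.visitedVertices := by
  obtain ⟨l, hl⟩ := visitedVertices_eq_cons q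
  rw [visitedVertices_comp, hl]
  simp [List.mem_append]
  constructor
  · rintro (h | h)
    · exact Or.inl h
    · exact Or.inr (Or.inr h)
  · rintro (h | rfl | h)
    · exact Or.inl h
    · exact Or.inl (end_mem_visitedVertices p)
    · exact Or.inr h

theorem exists_decomp {a : V} {w : V} :
    ∀ {b : V} (p : Path a b), w ∈ p.visitedVertices →
      ∃ (q : Path a w) (r : Path w b), q.comp r = p
  | _, nil, h => by
      simp [visitedVertices] at h
      subst h
      exact ⟨nil, nil, rfl⟩
  | b, cons p e, h => by
      simp [visitedVertices] at h
      rcases h with h | rfl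
      · obtain ⟨q, r, rfl⟩ := exists_decomp p h
        exact ⟨q, r.cons e, rfl⟩
      · exact ⟨cons p e, nil, rfl⟩

theorem suffix_of_comp_eq_comp {a b : V} :
    ∀ {c : V} {r₁ r₂ : Path b c} (q₁ q₂ : Path a b),
      q₁.comp r₁ = q₂.comp r₂ → r₁.length ≤ r₂.length →
        ∃ s : Path b b, r₂ = s.comp r₁
  | _, nil, r₂, q₁, q₂, _, _ => ⟨r₂, (comp_nil r₂).symm⟩
  | c, cons r₁ e, r₂, q₁, q₂, h, hl => by
      cases r₂ with
      | nil => simp [length] at hl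
      | cons r₂ e' =>
      simp only [comp_cons] at h
      obtain rfl := obj_eq_of_cons_eq_cons h
      obtain rfl : e = e' := eq_of_heq (hom_heq_of_cons_eq_cons h)
      obtain h' := eq_of_heq (heq_of_cons_eq_cons h)
      simp only [length] at hl
      obtain ⟨s, hs⟩ := suffix_of_comp_eq_comp q₁ q₂ h' (Nat.le_of_succ_le_succ hl)
      exact ⟨s, by rw [hs, comp_cons]⟩

theorem comp_cancel {V : Type u} [Quiver.{v+1} V] (hG : Quiver.IsAcyclic V)
    {a b c : V} {q₁ q₂ : Path a b} {r₁ r₂ : Path b c}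
    (h : q₁.comp r₁ = q₂.comp r₂) : q₁ = q₂ ∧ r₁ = r₂ := by
  have key : r₁ = r₂ := by
    rcases Nat.le_total r₁.length r₂.length with hl | hl
    · obtain ⟨s, hs⟩ := suffix_of_comp_eq_comp q₁ q₂ h hl
      rw [hs, hG b s, nil_comp]
    · obtain ⟨s, hs⟩ := suffix_of_comp_eq_comp q₂ q₁ h.symm hl
      rw [hs, hG b s, nil_comp]
  subst key
  exact ⟨comp_injective_left _ h, rfl⟩

end Quiver.Path

namespace Quiver

variable {V : Type u} [Quiver.{v+1} V]

theorem pattern_path {n : ℕ} (π : Fin (n + 1) → V)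
    (hπ : ∀ i : Fin n, Nonempty (Path (π i.castSucc) (π i.succ))) :
    ∀ (j : ℕ) (hj : j ≤ n) (i : ℕ) (hi : i ≤ j),
      Nonempty (Path (π ⟨i, Nat.lt_succ_of_le (hi.trans hj)⟩) (π ⟨j, Nat.lt_succ_of_le hj⟩)) := by
  intro j
  induction j with
  | zero => intro hj i hi; obtain rfl := Nat.le_zero.mp hi; exact ⟨Path.nil⟩
  | succ j ih =>
    intro hj i hi
    rcases Nat.lt_or_ge i (j+1) with h | h
    · have hi' : i ≤ j := Nat.lt_succ_iff.mp h
      obtain ⟨p⟩ := ih (Nat.le_of_succ_le hj) i hi'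
      obtain ⟨q⟩ := hπ ⟨j, hj⟩
      exact ⟨p.comp q⟩
    · obtain rfl : i = j + 1 := Nat.le_antisymm hi h
      exact ⟨Path.nil⟩

theorem mem_visitedVertices_composePaths :
    ∀ {n : ℕ} (π : Fin (n + 1) → V)
      (ps : ∀ i : Fin n, Path (π i.castSucc) (π i.succ)) (i : Fin (n + 1)),
      π i ∈ (composePaths π ps).visitedVertices
  | 0, π, ps, i => by
      obtain rfl : i = 0 := Fin.fin_one_eq_zero i
      simp [composePaths, Path.visitedVertices]
  | n + 1, π, ps, i => by
      rw [show composePaths π ps =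
        (Quiver.composePaths (fun i : Fin (n + 1) => π i.castSucc)
          (fun i : Fin n => ps i.castSucc)).comp (ps (Fin.last n)) from rfl]
      refine (Path.mem_visitedVertices_comp _ _).mpr ?_
      refine Fin.lastCases ?_ ?_ i
      · exact Or.inr (Path.end_mem_visitedVertices _)
      · intro j
        exact Or.inl (mem_visitedVertices_composePaths (fun i : Fin (n+1) => π i.castSucc)
          (fun i : Fin n => ps i.castSucc) j)

theorem composePaths_injective (hG : IsAcyclic V) :
    ∀ {n : ℕ} (π : Fin (n + 1) → V),
      Function.Injective
        (fun ps : ∀ i : Fin n, Path (π i.castSucc) (π i.succ) => composePaths π ps)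
  | 0, π => by
      intro ps₁ ps₂ _
      funext i
      exact i.elim0
  | n + 1, π => by
      intro ps₁ ps₂ h
      simp only at h
      have h' := Path.comp_cancel hG
        (h : (composePaths (fun i : Fin (n+1) => π i.castSucc) fun i : Fin n => ps₁ i.castSucc).comp
            (ps₁ (Fin.last n))
          = (composePaths (fun i : Fin (n+1) => π i.castSucc) fun i : Fin n => ps₂ i.castSucc).comp
            (ps₂ (Fin.last n)))
      have hcast := composePaths_injective hG (fun i : Fin (n+1) => π i.castSucc) h'.1
      funext i
      refine Fin.lastCases ?_ ?_ i
      · exact h'.2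
      · intro j
        exact congrFun hcast j

theorem composePaths_surjective (hG : IsAcyclic V) :
    ∀ {n : ℕ} (π : Fin (n + 1) → V)
      (hπ : ∀ i : Fin n, Nonempty (Path (π i.castSucc) (π i.succ)))
      (p : Path (π 0) (π (Fin.last n))), (∀ i, π i ∈ p.visitedVertices) →
      ∃ ps, composePaths π ps = p
  | 0, π, _, p, _ => ⟨fun i => i.elim0, (hG _ p).symm⟩
  | n + 1, π, hπ, p, hp => by
      obtain ⟨q, r, hqr⟩ := Path.exists_decomp p (hp ((Fin.last n).castSucc))
      have hq : ∀ i : Fin (n + 1), π i.castSucc ∈ q.visitedVertices := by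
        intro i
        have hm := hp i.castSucc
        rw [← hqr, Path.mem_visitedVertices_comp] at hm
        rcases hm with hm | hm
        · exact hm
        · obtain ⟨r₁, r₂, hr⟩ := Path.exists_decomp r hm
          obtain ⟨t⟩ := pattern_path π hπ n (Nat.le_succ n) i.val (Nat.lt_succ_iff.mp i.isLt)
          have hnil : r₁.comp t = Path.nil := hG _ _
          have hlen : r₁.length + t.length = 0 := by
            simpa [Path.length_comp] using congrArg Path.length hnil
          have heq : π ((Fin.last n).castSucc) = π i.castSucc :=
            Path.eq_of_length_zero r₁ (by omega)
          rw [← heq]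
          exact Path.end_mem_visitedVertices q
      have hmid : ∀ i : Fin n, Nonempty (Path (π i.castSucc.castSucc) (π i.castSucc.succ)) :=
        fun i => hπ i.castSucc
      obtain ⟨ps', hps'⟩ := composePaths_surjective hG (fun i : Fin (n+1) => π i.castSucc) hmid q hq
      refine ⟨Fin.lastCases (motive := fun i : Fin (n+1) => Path (π i.castSucc) (π i.succ)) r ps', ?_⟩
      have h1 : (fun i : Fin n => Fin.lastCases
            (motive := fun i : Fin (n+1) => Path (π i.castSucc) (π i.succ)) r ps' i.castSucc) = ps' :=
        funext fun i => Fin.lastCases_castSucc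
          (motive := fun i : Fin (n+1) => Path (π i.castSucc) (π i.succ)) (last := r) (cast := ps') i
      have h2 : composePaths (fun i : Fin (n+1) => π i.castSucc)
          (fun i : Fin n => Fin.lastCases
            (motive := fun i : Fin (n+1) => Path (π i.castSucc) (π i.succ)) r ps' i.castSucc) = q :=
        (congrArg (composePaths (fun i : Fin (n+1) => π i.castSucc)) h1).trans hps'
      have h3 : Fin.lastCases
          (motive := fun i : Fin (n+1) => Path (π i.castSucc) (π i.succ)) r ps' (Fin.last n) = r :=
        Fin.lastCases_last (motive := fun i : Fin (n+1) => Path (π i.castSucc) (π i.succ)) (last := r) (cast := ps')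
      exact (congrArg₂ (fun (x : Path (π 0) (π (Fin.last n).castSucc))
        (y : Path (π (Fin.last n).castSucc) (π (Fin.last (n+1)))) => x.comp y) h2 h3).trans hqr

end Quiver

/-- Let `π = [π₀, …, πₙ]` be a pattern in an acyclic directed graph, i.e. a sequence of
visitedVertices such that each adjacent pair is joined by at least one path. Then the `n`-fold
concatenation map `(p₁, …, pₙ) ↦ p₁ ⋆ ⋯ ⋆ pₙ` is injective on the product of the sets of
paths from `πᵢ₋₁` to `πᵢ`, and its range is exactly `γ(π)`, the set of paths from `π₀` to
`πₙ` that pass through every `πᵢ`; i.e. it is a bijection onto `γ(π)`. -/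
theorem composePaths_bijective_onto_pattern {V : Type u} [Quiver.{v + 1} V]
    (hG : Quiver.IsAcyclic V) {n : ℕ} (π : Fin (n + 1) → V)
    (hπ : ∀ i : Fin n, Nonempty (Quiver.Path (π i.castSucc) (π i.succ))) :
    Function.Injective
        (fun ps : ∀ i : Fin n, Quiver.Path (π i.castSucc) (π i.succ) =>
          Quiver.composePaths π ps) ∧
      Set.range
          (fun ps : ∀ i : Fin n, Quiver.Path (π i.castSucc) (π i.succ) =>
            Quiver.composePaths π ps)
        = {p : Quiver.Path (π 0) (π (Fin.last n)) |
            ∀ i : Fin (n + 1), p.PassesThrough (π i)} := by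
  refine ⟨Quiver.composePaths_injective hG π, ?_⟩
  ext p
  constructor
  · rintro ⟨ps, rfl⟩ i
    exact Quiver.mem_visitedVertices_composePaths π ps i
  · intro hp
    exact Quiver.composePaths_surjective hG π hπ p hp
end

section
/- (Proposition 1, Chain Rule.) Let G be an acyclic directed graph in which the set of paths between any two vertices is finite, let (Z, μ) be a measure space, and for each edge e let w_e : Z → ℝ be a measurable function such that for every path p the function z ↦ ∏_{e ∈ p} w_e(z) is integrable with respect to μ. Let π = [π₀, π₁, …, πₙ] be a pattern such that for each i < n there exists at least one path from πᵢ to πᵢ₊₁. Then the pattern influence ∑_{p ∈ γ(π)} ∫_Z ∏_{e ∈ p} w_e(z) dμ(z) equals ∫_Z ∏_{i=1}^{n} ( ∑_{p a path from πᵢ₋₁ to πᵢ} ∏_{e ∈ p} w_e(z) ) dμ(z). -/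
universe v u

open MeasureTheory

/-- The pointwise weight of a path: at each point `z`, the product of the weights
`w e z` of its edges (the nil path has weight `1`). -/
def Quiver.Path.weightAt {V : Type*} [Quiver V] {Z : Type*}
    (w : ∀ {a b : V}, (a ⟶ b) → Z → ℝ) {a : V} :
    ∀ {b : V}, Quiver.Path a b → Z → ℝ
  | _, Quiver.Path.nil, _ => 1
  | _, Quiver.Path.cons p e, z => Quiver.Path.weightAt w p z * w e z

namespace QuiverChainAux

open Quiver Quiver.Path

variable {V : Type*} [Quiver V]

lemma end_mem_vertices {a : V} : ∀ {b : V} (p : Quiver.Path a b), b ∈ p.visitedVertices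
  | _, Quiver.Path.nil => List.mem_singleton.2 rfl
  | _, Quiver.Path.cons _ _ => by simp [Quiver.Path.visitedVertices]

lemma start_mem_vertices {a : V} : ∀ {b : V} (p : Quiver.Path a b), a ∈ p.visitedVertices
  | _, Quiver.Path.nil => List.mem_singleton.2 rfl
  | _, Quiver.Path.cons p _ => by
      simp [Quiver.Path.visitedVertices]
      exact Or.inl (start_mem_vertices p)

lemma mem_vertices_comp {a b : V} {x : V} :
    ∀ {c : V} (p : Quiver.Path a b) (q : Quiver.Path b c),
      (x ∈ (p.comp q).visitedVertices ↔ x ∈ p.visitedVertices ∨ x ∈ q.visitedVertices)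
  | _, p, Quiver.Path.nil => by
      simp only [Quiver.Path.comp_nil, Quiver.Path.visitedVertices, List.mem_singleton]
      constructor
      · exact Or.inl
      · rintro (h | rfl)
        · exact h
        · exact end_mem_vertices p
  | _, p, Quiver.Path.cons q e => by
      simp only [Quiver.Path.comp_cons, Quiver.Path.visitedVertices, List.mem_append,
        List.mem_singleton, mem_vertices_comp p q]
      tauto

lemma weightAt_comp {Z : Type*} (w : ∀ {a b : V}, (a ⟶ b) → Z → ℝ) (z : Z) {a b : V} :
    ∀ {c : V} (p : Quiver.Path a b) (q : Quiver.Path b c),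
      (p.comp q).weightAt w z = p.weightAt w z * q.weightAt w z
  | _, p, Quiver.Path.nil => (mul_one _).symm
  | _, p, Quiver.Path.cons q e => by
      simp only [Quiver.Path.comp_cons, Quiver.Path.weightAt]
      rw [weightAt_comp w z p q, mul_assoc]

lemma exists_comp_of_mem_vertices {a : V} :
    ∀ {c : V} (p : Quiver.Path a c) {x : V}, x ∈ p.visitedVertices →
      ∃ (q : Quiver.Path a x) (r : Quiver.Path x c), p = q.comp r
  | _, Quiver.Path.nil, x, hx => by
      obtain rfl : x = a := List.mem_singleton.1 hx
      exact ⟨Quiver.Path.nil, Quiver.Path.nil, rfl⟩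
  | c, Quiver.Path.cons p e, x, hx => by
      rcases List.mem_append.1 hx with h | h
      · obtain ⟨q, r, rfl⟩ := exists_comp_of_mem_vertices p h
        exact ⟨q, r.cons e, rfl⟩
      · obtain rfl : x = c := List.mem_singleton.1 h
        exact ⟨(p.cons e), Quiver.Path.nil, (Quiver.Path.comp_nil _).symm⟩

lemma comp_inj_of_acyclic (hG : Quiver.IsAcyclic V) {a b : V} :
    ∀ {c : V} (r r' : Quiver.Path b c) (q q' : Quiver.Path a b),
      q.comp r = q'.comp r' → q = q' ∧ r = r'
  | _, Quiver.Path.nil, r', q, q', h => by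
      obtain rfl : r' = Quiver.Path.nil := hG b r'
      simp only [Quiver.Path.comp_nil] at h
      exact ⟨h, rfl⟩
  | c, Quiver.Path.cons s e, r', q, q', h => by
      cases r' with
      | nil =>
          exact absurd (hG b (s.cons e)) (by simp)
      | cons s' e' =>
          simp only [Quiver.Path.comp_cons] at h
          obtain rfl := Quiver.Path.obj_eq_of_cons_eq_cons h
          obtain hpe := Quiver.Path.heq_of_cons_eq_cons h
          obtain hee := Quiver.Path.hom_heq_of_cons_eq_cons h
          obtain rfl := eq_of_heq hee
          obtain ⟨rfl, rfl⟩ := comp_inj_of_acyclic hG s s' q q' (eq_of_heq hpe)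
          exact ⟨rfl, rfl⟩

lemma nonempty_path_of_le {m : ℕ} (π : Fin (m + 1) → V)
    (hπ : ∀ i : Fin m, Nonempty (Quiver.Path (π i.castSucc) (π i.succ)))
    (j i : Fin (m + 1)) (hij : i ≤ j) : Nonempty (Quiver.Path (π i) (π j)) := by
  induction j using Fin.induction with
  | zero =>
      obtain rfl : i = 0 := le_antisymm hij (Fin.zero_le i)
      exact ⟨Quiver.Path.nil⟩
  | succ k ih =>
      rcases eq_or_lt_of_le hij with rfl | hlt
      · exact ⟨Quiver.Path.nil⟩
      · have h2 : i ≤ k.castSucc := by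
          rw [Fin.le_def]
          rw [Fin.lt_def] at hlt
          simp only [Fin.val_succ] at hlt
          simp only [Fin.coe_castSucc]
          omega
        obtain ⟨p⟩ := ih h2
        obtain ⟨q⟩ := hπ k
        exact ⟨p.comp q⟩

open scoped Classical in
lemma key {V : Type u} [Quiver.{v + 1} V] [∀ a b : V, Fintype (Quiver.Path a b)]
    (hG : Quiver.IsAcyclic V) {Z : Type*} (w : ∀ {a b : V}, (a ⟶ b) → Z → ℝ) :
    ∀ (n : ℕ) (π : Fin (n + 1) → V),
      (∀ i : Fin n, Nonempty (Quiver.Path (π i.castSucc) (π i.succ))) → ∀ z : Z,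
      (∑ p : {p : Quiver.Path (π 0) (π (Fin.last n)) //
          ∀ i : Fin (n + 1), p.PassesThrough (π i)},
        (p : Quiver.Path (π 0) (π (Fin.last n))).weightAt w z)
      = ∏ i : Fin n, ∑ p : Quiver.Path (π i.castSucc) (π i.succ), p.weightAt w z := by
  intro n
  induction n with
  | zero =>
      intro π hπ z
      rw [Finset.prod_of_isEmpty]
      have hpass : ∀ i : Fin 1,
          (Quiver.Path.nil : Quiver.Path (π 0) (π (Fin.last 0))).PassesThrough (π i) := by
        intro i
        obtain rfl : i = 0 := Subsingleton.elim i 0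
        simp [Quiver.Path.PassesThrough, Quiver.Path.visitedVertices]
      rw [Fintype.sum_eq_single (⟨Quiver.Path.nil, hpass⟩ :
          {p : Quiver.Path (π 0) (π (Fin.last 0)) // ∀ i : Fin 1, p.PassesThrough (π i)})]
      · rfl
      · intro b hb
        exact absurd (Subtype.ext (hG _ b.1)) hb
  | succ n ih =>
      intro π hπ z
      have hπ' : ∀ i : Fin n,
          Nonempty (Quiver.Path (π (i.castSucc).castSucc) (π (i.succ).castSucc)) := by
        intro i
        have h := hπ i.castSucc
        rwa [Fin.succ_castSucc] at h
      have IH := ih (fun i => π i.castSucc) hπ' z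
      rw [Fin.prod_univ_castSucc]
      have hS : ∀ i : Fin n,
          (∑ p : Quiver.Path (π (i.castSucc).castSucc) (π (i.castSucc).succ),
            p.weightAt w z)
          = ∑ p : Quiver.Path (π (i.castSucc).castSucc) (π (i.succ).castSucc),
              p.weightAt w z := by
        intro i
        rw [Fin.succ_castSucc]
      rw [Finset.prod_congr rfl (fun i _ => hS i), ← IH, Finset.sum_mul_sum,
        ← Finset.sum_product', Finset.univ_product_univ]
      -- Now RHS is a sum over pairs (q, r); set up the bijection.
      set T := {p : Quiver.Path (π 0) (π (Fin.last (n + 1))) //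
          ∀ i : Fin (n + 2), p.PassesThrough (π i)}
      set S := {p : Quiver.Path (π (0 : Fin (n+1)).castSucc) (π (Fin.last n).castSucc) //
          ∀ i : Fin (n + 1), p.PassesThrough (π i.castSucc)}
      have hΦpass : ∀ (q : S) (r : Quiver.Path (π (Fin.last n).castSucc)
            (π (Fin.last n).succ)) (i : Fin (n + 2)),
          (q.1.comp r).PassesThrough (π i) := by
        intro q r i
        induction i using Fin.lastCases with
        | last =>
            exact (mem_vertices_comp q.1 r).2 (Or.inr (end_mem_vertices r))
        | cast j =>
            exact (mem_vertices_comp q.1 r).2 (Or.inl (q.2 j))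
      have hbij : Function.Bijective (fun x : S × Quiver.Path (π (Fin.last n).castSucc)
            (π (Fin.last n).succ) => (⟨x.1.1.comp x.2, hΦpass x.1 x.2⟩ : T)) := by
        constructor
        · rintro ⟨q, r⟩ ⟨q', r'⟩ h
          simp only [Subtype.mk.injEq] at h
          obtain ⟨hq, hr⟩ := comp_inj_of_acyclic hG r r' q.1 q'.1 (congrArg Subtype.val h)
          exact Prod.ext (Subtype.ext hq) hr
        · rintro ⟨p, hp⟩
          have hb : π (Fin.last n).castSucc ∈ p.visitedVertices := hp (Fin.last n).castSucc
          obtain ⟨q, r, rfl⟩ := exists_comp_of_mem_vertices p hb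
          have hq : ∀ j : Fin (n + 1), q.PassesThrough (π j.castSucc) := by
            intro j
            have hj := hp j.castSucc
            rcases (mem_vertices_comp q r).1 hj with h | h
            · exact h
            · obtain ⟨r1, r2, hr⟩ := exists_comp_of_mem_vertices r h
              have hle : j.castSucc ≤ (Fin.last n).castSucc :=
                Fin.castSucc_le_castSucc_iff.2 (Fin.le_last j)
              obtain ⟨pb⟩ := nonempty_path_of_le π hπ ((Fin.last n).castSucc) j.castSucc hle
              have hcyc := hG _ (r1.comp pb)
              have hlen : r1.length = 0 := by
                have := congrArg Quiver.Path.length hcyc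
                rw [Quiver.Path.length_comp] at this
                simp only [Quiver.Path.length_nil] at this
                omega
              have heq : π (Fin.last n).castSucc = π j.castSucc :=
                r1.eq_of_length_zero hlen
              rw [← heq]
              exact end_mem_vertices q
          exact ⟨(⟨q, hq⟩, r), rfl⟩
      refine (Fintype.sum_bijective _ hbij _ _ ?_).symm
      rintro ⟨q, r⟩
      exact (weightAt_comp w z q.1 r).symm

end QuiverChainAux

open scoped Classical in
/-- **Proposition 1 (Chain Rule).** Let `G` be an acyclic directed graph with finite path
sets, `(Z, μ)` a measure space, and for each edge `e` a measurable weight function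
`w e : Z → ℝ` such that every path's weight function is integrable. Then for every pattern
`π = [π₀, …, πₙ]` (each adjacent pair joined by at least one path), the pattern influence
`∑_{p ∈ γ(π)} ∫ ∏_{e ∈ p} w e z ∂μ` equals
`∫ ∏_{i=1}^{n} (∑_{p : path πᵢ₋₁ → πᵢ} ∏_{e ∈ p} w e z) ∂μ`. -/
theorem pattern_influence_chain_rule {V : Type u} [Quiver.{v + 1} V]
    [∀ a b : V, Fintype (Quiver.Path a b)] (hG : Quiver.IsAcyclic V)
    {Z : Type*} [MeasurableSpace Z] (μ : Measure Z)
    (w : ∀ {a b : V}, (a ⟶ b) → Z → ℝ)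
    (hmeas : ∀ {a b : V} (e : a ⟶ b), Measurable (w e))
    (hint : ∀ {a b : V} (p : Quiver.Path a b), Integrable (p.weightAt w) μ)
    {n : ℕ} (π : Fin (n + 1) → V)
    (hπ : ∀ i : Fin n, Nonempty (Quiver.Path (π i.castSucc) (π i.succ))) :
    (∑ p : {p : Quiver.Path (π 0) (π (Fin.last n)) //
        ∀ i : Fin (n + 1), p.PassesThrough (π i)},
        ∫ z, (p : Quiver.Path (π 0) (π (Fin.last n))).weightAt w z ∂μ)
      = ∫ z, ∏ i : Fin n,
          ∑ p : Quiver.Path (π i.castSucc) (π i.succ), p.weightAt w z ∂μ := by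
  rw [← integral_finset_sum _ (fun p _ => hint p.1)]
  exact integral_congr_ae (Filter.Eventually.of_forall
    (fun z => QuiverChainAux.key hG w n π hπ z))
end
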